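/- arXiv:1710.06526 — 3 statements merged into one kernel-verified Lean document; each statement's English description precedes it below -/
import Mathlib

section
/- The function t ↦ (1 - β + β t^{1/θ})^θ on (0,∞) is concave when θ ≥ 1 or θ < 0, and convex when 0 < θ ≤ 1, where β ∈ (0,1). -/
open Real

private lemma phi_hasDeriv (β θ : ℝ) (hβ0 : 0 < β) (hβ1 : β < 1) (hθ : θ ≠ 0)
    {t : ℝ} (ht : 0 < t) :
    HasDerivAt (fun t => (1 - β + β * t ^ (1 / θ)) ^ θ)
      (β * ((1 - β) * t ^ (-(1 / θ)) + β) ^ (θ - 1)) t := by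
  set a := 1 / θ with ha
  have hc : (0:ℝ) < 1 - β := by linarith
  have hu : 0 < 1 - β + β * t ^ a := by positivity
  have h1 : HasDerivAt (fun t : ℝ => t ^ a) (a * t ^ (a - 1)) t :=
    Real.hasDerivAt_rpow_const (Or.inl (ne_of_gt ht))
  have h2 : HasDerivAt (fun t : ℝ => 1 - β + β * t ^ a) (β * (a * t ^ (a - 1))) t :=
    (h1.const_mul β).const_add (1 - β)
  have h3 := h2.rpow_const (p := θ) (Or.inl (ne_of_gt hu))
  convert h3 using 1
  have haθ : a * θ = 1 := by rw [ha, one_div, inv_mul_cancel₀ hθ]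
  have key : t ^ (a - 1) = (t ^ (-a)) ^ (θ - 1) := by
    rw [← Real.rpow_mul ht.le]
    congr 1
    have : -a * (θ - 1) = -(a*θ) + a := by ring
    rw [this, haθ]; ring
  have hmul : (t ^ (-a)) ^ (θ - 1) * (1 - β + β * t ^ a) ^ (θ - 1)
      = (t ^ (-a) * (1 - β + β * t ^ a)) ^ (θ - 1) := by
    rw [← Real.mul_rpow (Real.rpow_nonneg ht.le _) hu.le]
  have hsplit : t ^ (-a) * (1 - β + β * t ^ a) = (1 - β) * t ^ (-a) + β := by
    have : t ^ (-a) * t ^ a = 1 := by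
      rw [← Real.rpow_add ht]; simp
    linear_combination β * this
  symm
  calc β * (a * t ^ (a - 1)) * θ * (1 - β + β * t ^ a) ^ (θ - 1)
      = β * (a * θ) * (t ^ (a - 1) * (1 - β + β * t ^ a) ^ (θ - 1)) := by ring
    _ = β * ((1 - β) * t ^ (-a) + β) ^ (θ - 1) := by
        rw [haθ, key, hmul, hsplit]; ring

/-- `φ(t) = (1 - β + β t^{1/θ})^θ` on `(0,∞)` is concave when `θ ≥ 1` or `θ < 0`,
and convex when `0 < θ ≤ 1`, for `β ∈ (0,1)`. -/
theorem stmt_6 (β θ : ℝ) (hβ0 : 0 < β) (hβ1 : β < 1) (hθ : θ ≠ 0) :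
    ((1 ≤ θ ∨ θ < 0) →
      ConcaveOn ℝ (Set.Ioi (0 : ℝ)) (fun t => (1 - β + β * t ^ (1 / θ)) ^ θ)) ∧
    (0 < θ → θ ≤ 1 →
      ConvexOn ℝ (Set.Ioi (0 : ℝ)) (fun t => (1 - β + β * t ^ (1 / θ)) ^ θ)) := by
  have hc : (0:ℝ) < 1 - β := by linarith
  set φ : ℝ → ℝ := fun t => (1 - β + β * t ^ (1 / θ)) ^ θ with hφ
  have hder : ∀ t ∈ Set.Ioi (0:ℝ),
      deriv φ t = β * ((1 - β) * t ^ (-(1 / θ)) + β) ^ (θ - 1) := fun t ht =>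
    (phi_hasDeriv β θ hβ0 hβ1 hθ ht).deriv
  have hdiff : DifferentiableOn ℝ φ (interior (Set.Ioi (0:ℝ))) := by
    rw [interior_Ioi]
    exact fun t ht =>
      (phi_hasDeriv β θ hβ0 hβ1 hθ ht).differentiableAt.differentiableWithinAt
  have hcont : ContinuousOn φ (Set.Ioi (0:ℝ)) := by
    rw [← interior_Ioi]; exact hdiff.continuousOn
  have hg : ∀ t : ℝ, 0 < t → 0 < (1 - β) * t ^ (-(1 / θ)) + β := by
    intro t ht; positivity
  -- comparison of g at two points
  have hgle_pos : 0 < θ → ∀ x y : ℝ, 0 < x → x ≤ y →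
      (1 - β) * y ^ (-(1 / θ)) + β ≤ (1 - β) * x ^ (-(1 / θ)) + β := by
    intro hθp x y hx hxy
    have : y ^ (-(1 / θ)) ≤ x ^ (-(1 / θ)) :=
      Real.rpow_le_rpow_of_nonpos hx hxy (neg_nonpos.mpr (by positivity))
    nlinarith
  have hgle_neg : θ < 0 → ∀ x y : ℝ, 0 < x → x ≤ y →
      (1 - β) * x ^ (-(1 / θ)) + β ≤ (1 - β) * y ^ (-(1 / θ)) + β := by
    intro hθn x y hx hxy
    have h1θ : (0:ℝ) ≤ -(1/θ) := by
      have : 1/θ < 0 := div_neg_of_pos_of_neg one_pos hθn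
      linarith
    have : x ^ (-(1 / θ)) ≤ y ^ (-(1 / θ)) := Real.rpow_le_rpow hx.le hxy h1θ
    nlinarith
  constructor
  · rintro (h1 | h1)
    · -- θ ≥ 1 : deriv is antitone
      refine AntitoneOn.concaveOn_of_deriv (convex_Ioi 0) hcont hdiff ?_
      rw [interior_Ioi]
      intro x hx y hy hxy
      rw [hder x hx, hder y hy]
      have hgy := hg y hy
      have hle := hgle_pos (by linarith) x y hx hxy
      exact mul_le_mul_of_nonneg_left
        (Real.rpow_le_rpow hgy.le hle (by linarith)) hβ0.le
    · -- θ < 0 : deriv is antitone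
      refine AntitoneOn.concaveOn_of_deriv (convex_Ioi 0) hcont hdiff ?_
      rw [interior_Ioi]
      intro x hx y hy hxy
      rw [hder x hx, hder y hy]
      have hgx := hg x hx
      have hle := hgle_neg h1 x y hx hxy
      exact mul_le_mul_of_nonneg_left
        (Real.rpow_le_rpow_of_nonpos hgx hle (by linarith)) hβ0.le
  · intro hθp hθ1
    refine MonotoneOn.convexOn_of_deriv (convex_Ioi 0) hcont hdiff ?_
    rw [interior_Ioi]
    intro x hx y hy hxy
    rw [hder x hx, hder y hy]
    have hgy := hg y hy
    have hle := hgle_pos hθp x y hx hxy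
    exact mul_le_mul_of_nonneg_left
      (Real.rpow_le_rpow_of_nonpos hgy hle (by linarith)) hβ0.le
end

section
/- In the Bansal–Yaron model with ln(C_{t+1}/C_t) = μ_c + X_t + σ_c ε_{t+1} and X_{t+1} = ρX_t + ση_{t+1} (stationary Gaussian AR(1) start, iid standard normal shocks), the risk-adjusted long-run mean consumption growth rate M := lim_{n→∞} (E[(C_n/C_0)^{1-γ}])^{1/((1-γ)n)} exists and equals exp{ μ_c + (1/2)(1-γ)(σ_c² + σ²/(1-ρ)²) }, for γ ≠ 1. -/
open MeasureTheory ProbabilityTheory Filter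

open Real
open scoped NNReal ENNReal

lemma BY_gauss_exp (v : ℝ≥0) (t : ℝ) :
    ∫ x, Real.exp (t * x) ∂(gaussianReal 0 v) = Real.exp ((v : ℝ) * t ^ 2 / 2) := by
  rcases eq_or_ne v 0 with hv | hv
  · subst hv
    simp [gaussianReal_zero_var]
  · have hv' : (0:ℝ) < (v:ℝ) := by
      exact_mod_cast lt_of_le_of_ne (zero_le : (0:ℝ≥0) ≤ v) (Ne.symm hv)
    rw [gaussianReal_of_var_ne_zero _ hv]
    have hmeas : Measurable fun x => Real.toNNReal (gaussianPDFReal 0 v x) :=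
      (measurable_gaussianPDFReal 0 v).real_toNNReal
    have hd : (gaussianPDF 0 v)
        = fun x => ((Real.toNNReal (gaussianPDFReal 0 v x) : ℝ≥0) : ℝ≥0∞) := rfl
    rw [hd, integral_withDensity_eq_integral_smul hmeas]
    have hpt : ∀ x : ℝ, (Real.toNNReal (gaussianPDFReal 0 v x) : ℝ≥0) • Real.exp (t * x)
        = Real.exp ((v:ℝ) * t ^ 2 / 2) * gaussianPDFReal ((v:ℝ) * t) v x := by
      intro x
      rw [NNReal.smul_def, smul_eq_mul, Real.coe_toNNReal _ (gaussianPDFReal_nonneg 0 v x)]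
      simp only [gaussianPDFReal]
      have key : rexp (-(x - 0)^2/(2*(v:ℝ))) * rexp (t*x)
          = rexp ((v:ℝ)*t^2/2) * rexp (-(x - (v:ℝ)*t)^2/(2*(v:ℝ))) := by
        rw [← Real.exp_add, ← Real.exp_add]
        congr 1
        field_simp
        ring
      rw [mul_assoc, key]
      ring
    simp_rw [hpt]
    rw [integral_const_mul, integral_gaussianPDFReal_eq_one _ hv, mul_one]

lemma BY_mgf {Ω : Type*} [MeasurableSpace Ω] {μ : Measure Ω} {f : Ω → ℝ} (hf : Measurable f)
    {v : ℝ≥0} (h : Measure.map f μ = gaussianReal 0 v) (t : ℝ) :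
    mgf f μ t = Real.exp ((v:ℝ) * t ^ 2 / 2) := by
  have : mgf f μ t = ∫ x, Real.exp (t * x) ∂(Measure.map f μ) := by
    rw [mgf, integral_map hf.aemeasurable
      (Continuous.aestronglyMeasurable (by continuity))]
  rw [this, h, BY_gauss_exp]

noncomputable def BYA (ρ : ℝ) (n : ℕ) : ℝ := ∑ t ∈ Finset.range n, ρ ^ t

lemma BYA_succ (ρ : ℝ) (n : ℕ) : BYA ρ (n + 1) = BYA ρ n + ρ ^ n :=
  Finset.sum_range_succ _ _

lemma BYA_zero (ρ : ℝ) : BYA ρ 0 = 0 := Finset.sum_range_zero _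

lemma BY_X_formula {Ω : Type*} (ρ σ : ℝ) (X η : ℕ → Ω → ℝ)
    (hrecX : ∀ t ω, X (t + 1) ω = ρ * X t ω + σ * η (t + 1) ω) :
    ∀ n ω, X n ω = ρ ^ n * X 0 ω + σ * ∑ j ∈ Finset.range n, ρ ^ (n - 1 - j) * η (j + 1) ω := by
  intro n
  induction n with
  | zero => intro ω; simp
  | succ n ih =>
    intro ω
    rw [hrecX, ih ω, Finset.sum_range_succ]
    have hs : ∑ j ∈ Finset.range n, ρ ^ (n + 1 - 1 - j) * η (j + 1) ω
        = ρ * ∑ j ∈ Finset.range n, ρ ^ (n - 1 - j) * η (j + 1) ω := by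
      rw [Finset.mul_sum]
      refine Finset.sum_congr rfl fun j hj => ?_
      rw [Finset.mem_range] at hj
      rw [← mul_assoc, ← pow_succ']
      congr 2
      omega
    rw [hs]
    have h0 : n + 1 - 1 - n = 0 := by omega
    rw [h0, pow_zero]
    ring

lemma BY_Xsum {Ω : Type*} (ρ σ : ℝ) (X η : ℕ → Ω → ℝ)
    (hrecX : ∀ t ω, X (t + 1) ω = ρ * X t ω + σ * η (t + 1) ω) :
    ∀ n ω, ∑ t ∈ Finset.range n, X t ω
      = BYA ρ n * X 0 ω + σ * ∑ j ∈ Finset.range n, BYA ρ (n - 1 - j) * η (j + 1) ω := by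
  intro n
  induction n with
  | zero => intro ω; simp [BYA_zero]
  | succ n ih =>
    intro ω
    rw [Finset.sum_range_succ, ih ω, BY_X_formula ρ σ X η hrecX n ω]
    rw [Finset.sum_range_succ (f := fun j => BYA ρ (n + 1 - 1 - j) * η (j + 1) ω)]
    have h0 : n + 1 - 1 - n = 0 := by omega
    have hAsucc : ∀ j ∈ Finset.range n, BYA ρ (n + 1 - 1 - j) * η (j + 1) ω
        = BYA ρ (n - 1 - j) * η (j + 1) ω + ρ ^ (n - 1 - j) * η (j + 1) ω := by
      intro j hj
      rw [Finset.mem_range] at hj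
      have h1 : n + 1 - 1 - j = (n - 1 - j) + 1 := by omega
      rw [h1, BYA_succ]
      ring
    rw [Finset.sum_congr rfl hAsucc, Finset.sum_add_distrib, h0, BYA_zero, BYA_succ]
    ring

lemma BY_mgf_const_mul {Ω : Type*} [MeasurableSpace Ω] (μ : Measure Ω) (g : Ω → ℝ) (cc t : ℝ) :
    mgf (fun ω => cc * g ω) μ t = mgf g μ (t * cc) := by
  simp only [mgf, ← mul_assoc]

/-- Bansal–Yaron model: with `ln(C_{t+1}/C_t) = μ_c + Xₜ + σ_c ε_{t+1}` and a stationary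
Gaussian AR(1) state `X_{t+1} = ρ Xₜ + σ η_{t+1}`, the risk-adjusted long-run mean
consumption growth rate equals `exp(μ_c + (1/2)(1-γ)(σ_c² + σ²/(1-ρ)²))`. -/
theorem stmt_10 {Ω : Type*} [MeasurableSpace Ω] (μ : Measure Ω) [IsProbabilityMeasure μ]
    (μc ρ σ σc γ : ℝ) (hρ : |ρ| < 1) (hσ : 0 < σ) (hσc : 0 < σc) (hγ : γ ≠ 1)
    (X η ε : ℕ → Ω → ℝ) (C : ℕ → Ω → ℝ)
    (hXmeas : ∀ t, Measurable (X t)) (hηmeas : ∀ t, Measurable (η t))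
    (hεmeas : ∀ t, Measurable (ε t)) (hCmeas : ∀ t, Measurable (C t))
    (hCpos : ∀ t ω, 0 < C t ω)
    -- joint independence of X₀, the η's and the ε's
    (hindep : iIndepFun
      (fun k : Unit ⊕ ℕ ⊕ ℕ =>
        Sum.elim (fun _ => X 0) (Sum.elim (fun t => η (t + 1)) (fun t => ε (t + 1))) k) μ)
    -- laws
    (hX0 : Measure.map (X 0) μ = gaussianReal 0 (Real.toNNReal (σ ^ 2 / (1 - ρ ^ 2))))
    (hη : ∀ t, Measure.map (η (t + 1)) μ = gaussianReal 0 1)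
    (hε : ∀ t, Measure.map (ε (t + 1)) μ = gaussianReal 0 1)
    -- dynamics
    (hrecX : ∀ t ω, X (t + 1) ω = ρ * X t ω + σ * η (t + 1) ω)
    (hrecC : ∀ t ω, Real.log (C (t + 1) ω / C t ω) = μc + X t ω + σc * ε (t + 1) ω) :
    Tendsto
      (fun n : ℕ =>
        (∫ ω, (C n ω / C 0 ω) ^ (1 - γ) ∂μ) ^ (1 / ((1 - γ) * n)))
      atTop
      (nhds (Real.exp (μc + (1 / 2) * (1 - γ) * (σc ^ 2 + σ ^ 2 / (1 - ρ) ^ 2)))) := by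
  classical
  have hρ' := abs_lt.mp hρ
  have hρ2 : ρ ^ 2 < 1 := by nlinarith [hρ'.1, hρ'.2]
  have h1ρ2 : (0:ℝ) < 1 - ρ ^ 2 := by linarith
  have h1ρ : (0:ℝ) < 1 - ρ := by linarith [hρ'.2]
  have hθ : (1 - γ) ≠ 0 := sub_ne_zero_of_ne (Ne.symm hγ)
  have hv0 : (0:ℝ) ≤ σ ^ 2 / (1 - ρ ^ 2) := div_nonneg (sq_nonneg σ) h1ρ2.le
  set F : Unit ⊕ ℕ ⊕ ℕ → Ω → ℝ := fun k =>
    Sum.elim (fun _ => X 0) (Sum.elim (fun t => η (t + 1)) (fun t => ε (t + 1))) k with hF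
  set c : ℕ → Unit ⊕ ℕ ⊕ ℕ → ℝ := fun n =>
    Sum.elim (fun _ => BYA ρ n) (Sum.elim (fun j => σ * BYA ρ (n - 1 - j)) fun _ => σc) with hc
  set Y : ℕ → Unit ⊕ ℕ ⊕ ℕ → Ω → ℝ := fun n k => fun ω => c n k * F k ω with hY
  set s : ℕ → Finset (Unit ⊕ ℕ ⊕ ℕ) := fun n =>
    ({()} : Finset Unit).disjSum ((Finset.range n).disjSum (Finset.range n)) with hs
  have hFmeas : ∀ k, Measurable (F k) := by
    rintro (u | j | t)
    · exact hXmeas 0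
    · exact hηmeas (j + 1)
    · exact hεmeas (t + 1)
  have hYmeas : ∀ n k, Measurable (Y n k) := fun n k => (hFmeas k).const_mul _
  have hYindep : ∀ n, iIndepFun (Y n) μ := fun n =>
    hindep.comp (fun k => fun x => c n k * x) (fun k => measurable_id.const_mul _)
  -- log of consumption ratio as a sum
  have hT : ∀ n ω, Real.log (C n ω / C 0 ω) = n * μc + (∑ k ∈ s n, Y n k) ω := by
    intro n ω
    have key : ∀ m, Real.log (C m ω) - Real.log (C 0 ω)
        = ∑ t ∈ Finset.range m, (μc + X t ω + σc * ε (t + 1) ω) := by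
      intro m
      induction m with
      | zero => simp
      | succ m ih =>
        rw [Finset.sum_range_succ, ← ih, ← hrecC m ω,
          Real.log_div (hCpos _ ω).ne' (hCpos _ ω).ne']
        ring
    rw [Real.log_div (hCpos _ ω).ne' (hCpos _ ω).ne', key n]
    rw [Finset.sum_apply]
    simp only [hs, Finset.sum_disjSum, Finset.sum_singleton, hY, hc, hF,
      Sum.elim_inl, Sum.elim_inr]
    rw [Finset.sum_add_distrib, Finset.sum_add_distrib, Finset.sum_const, Finset.card_range,
      BY_Xsum ρ σ X η hrecX n ω]
    rw [nsmul_eq_mul, Finset.mul_sum]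
    simp only [← mul_assoc]
    ring
  -- variance of each factor
  set V : Unit ⊕ ℕ ⊕ ℕ → ℝ :=
    Sum.elim (fun _ => σ ^ 2 / (1 - ρ ^ 2)) (Sum.elim (fun _ => 1) fun _ => 1) with hV
  have hmgfY : ∀ n k, mgf (Y n k) μ (1 - γ)
      = Real.exp (V k * ((1 - γ) * c n k) ^ 2 / 2) := by
    intro n k
    have h1 : mgf (Y n k) μ (1 - γ) = mgf (F k) μ ((1 - γ) * c n k) :=
      BY_mgf_const_mul μ (F k) (c n k) (1 - γ)
    rw [h1]
    rcases k with u | j | t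
    · rw [show F (Sum.inl u) = X 0 by simp [hF], BY_mgf (hXmeas 0) hX0]
      simp only [hV, Sum.elim_inl]
      rw [Real.coe_toNNReal _ hv0]
    · rw [show F (Sum.inr (Sum.inl j)) = η (j + 1) by simp [hF], BY_mgf (hηmeas (j + 1)) (hη j)]
      simp [hV]
    · rw [show F (Sum.inr (Sum.inr t)) = ε (t + 1) by simp [hF], BY_mgf (hεmeas (t + 1)) (hε t)]
      simp [hV]
  -- the exponent
  set E : ℕ → ℝ := fun n => (1 - γ) * (n * μc) + ((σ ^ 2 / (1 - ρ ^ 2)) * ((1 - γ) * BYA ρ n) ^ 2 / 2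
      + ((∑ k ∈ Finset.range n, ((1 - γ) * (σ * BYA ρ k)) ^ 2 / 2)
        + n * (((1 - γ) * σc) ^ 2 / 2))) with hE
  have hint : ∀ n, ∫ ω, (C n ω / C 0 ω) ^ (1 - γ) ∂μ = Real.exp (E n) := by
    intro n
    have h1 : ∀ ω, (C n ω / C 0 ω) ^ (1 - γ)
        = Real.exp ((1 - γ) * (n * μc)) * Real.exp ((1 - γ) * (∑ k ∈ s n, Y n k) ω) := by
      intro ω
      rw [Real.rpow_def_of_pos (div_pos (hCpos n ω) (hCpos 0 ω)), hT n ω, ← Real.exp_add]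
      congr 1
      ring
    rw [integral_congr_ae (ae_of_all _ h1), integral_const_mul]
    have h2 : ∫ ω, Real.exp ((1 - γ) * (∑ k ∈ s n, Y n k) ω) ∂μ
        = mgf (∑ k ∈ s n, Y n k) μ (1 - γ) := rfl
    rw [h2, (hYindep n).mgf_sum (hYmeas n) (s n)]
    simp only [hs]
    rw [Finset.prod_disjSum, Finset.prod_disjSum, Finset.prod_singleton]
    simp only [hmgfY]
    simp only [hV, hc, Sum.elim_inl, Sum.elim_inr, one_mul]
    rw [Finset.prod_range_reflect (fun j => Real.exp (((1 - γ) * (σ * BYA ρ j)) ^ 2 / 2)) n]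
    rw [Finset.prod_const, ← Real.exp_sum, ← Real.exp_nat_mul, ← Real.exp_add, ← Real.exp_add,
      ← Real.exp_add]
    congr 1
    simp only [hE, Finset.card_range]
  -- limits
  have hAlim : Tendsto (fun n => BYA ρ n) atTop (nhds (1 - ρ)⁻¹) :=
    (hasSum_geometric_of_abs_lt_one hρ).tendsto_sum_nat
  have hA2 : Tendsto (fun n => (BYA ρ n) ^ 2) atTop (nhds ((1 - ρ)⁻¹ ^ 2)) := hAlim.pow 2
  have hinv : Tendsto (fun n : ℕ => ((n : ℝ))⁻¹) atTop (nhds 0) :=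
    tendsto_inv_atTop_nhds_zero_nat
  have h01 : Tendsto (fun n : ℕ => (BYA ρ n) ^ 2 * ((n:ℝ))⁻¹) atTop (nhds 0) := by
    simpa using hA2.mul hinv
  have hces : Tendsto (fun n : ℕ => ((n:ℝ))⁻¹ * ∑ k ∈ Finset.range n, (BYA ρ k) ^ 2) atTop
      (nhds ((1 - ρ)⁻¹ ^ 2)) := hA2.cesaro
  set g : ℕ → ℝ := fun n => μc + ((1 - γ) / 2) * (σc ^ 2
      + ((σ ^ 2 / (1 - ρ ^ 2)) * ((BYA ρ n) ^ 2 * ((n:ℝ))⁻¹)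
        + σ ^ 2 * (((n:ℝ))⁻¹ * ∑ k ∈ Finset.range n, (BYA ρ k) ^ 2))) with hg
  have hglim : Tendsto g atTop
      (nhds (μc + (1 / 2) * (1 - γ) * (σc ^ 2 + σ ^ 2 / (1 - ρ) ^ 2))) := by
    have h2 : Tendsto (fun n : ℕ => σc ^ 2
        + ((σ ^ 2 / (1 - ρ ^ 2)) * ((BYA ρ n) ^ 2 * ((n:ℝ))⁻¹)
          + σ ^ 2 * (((n:ℝ))⁻¹ * ∑ k ∈ Finset.range n, (BYA ρ k) ^ 2))) atTop
        (nhds (σc ^ 2 + ((σ ^ 2 / (1 - ρ ^ 2)) * 0 + σ ^ 2 * ((1 - ρ)⁻¹ ^ 2)))) :=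
      tendsto_const_nhds.add ((tendsto_const_nhds.mul h01).add (tendsto_const_nhds.mul hces))
    have h3 := (tendsto_const_nhds (x := μc)).add (h2.const_mul ((1 - γ) / 2))
    have hcst : μc + (1 / 2) * (1 - γ) * (σc ^ 2 + σ ^ 2 / (1 - ρ) ^ 2)
        = μc + ((1 - γ) / 2) * (σc ^ 2 + ((σ ^ 2 / (1 - ρ ^ 2)) * 0
          + σ ^ 2 * ((1 - ρ)⁻¹ ^ 2))) := by
      field_simp
      ring
    rw [hcst]
    exact h3
  have hexp : Tendsto (fun n => Real.exp (g n)) atTop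
      (nhds (Real.exp (μc + (1 / 2) * (1 - γ) * (σc ^ 2 + σ ^ 2 / (1 - ρ) ^ 2)))) :=
    (Real.continuous_exp.tendsto _).comp hglim
  refine hexp.congr' ?_
  filter_upwards [eventually_ge_atTop 1] with n hn
  have hn' : ((n:ℝ)) ≠ 0 := Nat.cast_ne_zero.mpr (by omega)
  have h2' : (1 - ρ ^ 2) ≠ 0 := h1ρ2.ne'
  rw [hint n, Real.rpow_def_of_pos (Real.exp_pos _), Real.log_exp]
  congr 1
  have hsum : ∑ k ∈ Finset.range n, ((1 - γ) * (σ * BYA ρ k)) ^ 2 / 2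
      = ((1 - γ) * σ) ^ 2 / 2 * ∑ k ∈ Finset.range n, (BYA ρ k) ^ 2 := by
    rw [Finset.mul_sum]
    exact Finset.sum_congr rfl fun k _ => by ring
  simp only [hE, hg, hsum]
  field_simp
  ring
end

section
/- Let K be an n × n nonnegative irreducible matrix with spectral radius r(K) > 0, Perron eigenvector e ≫ 0 (Ke = r(K)e), left Perron eigenvector e* ≫ 0 (Kᵀe* = r(K)e*), and let β ∈ (0,1), θ > 0. Suppose g ∈ ℝⁿ is nonzero, nonnegative, and satisfies g(x) = (1 - β + β (Kg(x))^{1/θ})^θ for all x. Then β^θ r(K) < 1. -/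
open Real

/-- If `K` is a nonnegative irreducible matrix with `r(K) > 0`, right and left Perron
eigenvectors `e, e* ≫ 0`, and a nonzero nonnegative `g` satisfies the fixed point
equation `g = (1 - β + β (Kg)^{1/θ})^θ` with `β ∈ (0,1)`, `θ > 0`, then `β^θ r(K) < 1`. -/
theorem stmt_19 (n : ℕ) (K : Matrix (Fin n) (Fin n) ℝ)
    (hKnonneg : ∀ i j, 0 ≤ K i j)
    (hirr : ∀ S : Finset (Fin n), S.Nonempty → S ≠ Finset.univ →
      ∃ i ∈ S, ∃ j ∉ S, 0 < K i j)
    (r : ℝ) (hr : 0 < r)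
    (e : Fin n → ℝ) (he : ∀ i, 0 < e i) (hKe : K.mulVec e = r • e)
    (estar : Fin n → ℝ) (hestar : ∀ i, 0 < estar i)
    (hKestar : K.transpose.mulVec estar = r • estar)
    (β θ : ℝ) (hβ0 : 0 < β) (hβ1 : β < 1) (hθ : 0 < θ)
    (g : Fin n → ℝ) (hgnonneg : ∀ i, 0 ≤ g i) (hgne : g ≠ 0)
    (hfix : ∀ i, g i = (1 - β + β * (K.mulVec g i) ^ (1 / θ)) ^ θ) :
    β ^ θ * r < 1 := by
  have hn : 0 < n := by
    rcases Nat.eq_zero_or_pos n with h | h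
    · exact absurd (funext fun i => absurd i.2 (by omega)) hgne
    · exact h
  have : Nonempty (Fin n) := ⟨⟨0, hn⟩⟩
  have hmv : ∀ i, K.mulVec g i = ∑ j, K i j * g j := by
    intro i; simp [Matrix.mulVec, dotProduct]
  -- g is strictly positive
  have hg_pos : ∀ i, 0 < g i := by
    intro i
    rw [hfix i]
    apply Real.rpow_pos_of_pos
    have h1 : 0 ≤ (K.mulVec g i) ^ (1 / θ) := by
      apply Real.rpow_nonneg
      rw [hmv i]
      exact Finset.sum_nonneg fun j _ => mul_nonneg (hKnonneg i j) (hgnonneg j)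
    nlinarith
  -- Kg nonneg
  have hKg_nonneg : ∀ i, 0 ≤ K.mulVec g i := by
    intro i; rw [hmv i]
    exact Finset.sum_nonneg fun j _ => mul_nonneg (hKnonneg i j) (hgnonneg j)
  -- Kg positive: each row has a positive entry (from Ke = r e)
  have hKg_pos : ∀ i, 0 < K.mulVec g i := by
    intro i
    have hrow : 0 < ∑ j, K i j * e j := by
      have := congrFun hKe i
      simp only [Matrix.mulVec, dotProduct, Pi.smul_apply, smul_eq_mul] at this
      rw [this]; exact mul_pos hr (he i)
    have hex : ∃ j, 0 < K i j := by
      by_contra h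
      push_neg at h
      have hz : ∀ j, K i j = 0 := fun j => le_antisymm (h j) (hKnonneg i j)
      simp [hz] at hrow
    obtain ⟨j, hKij⟩ := hex
    rw [hmv i]
    apply Finset.sum_pos' (fun k _ => mul_nonneg (hKnonneg i k) (hgnonneg k))
    exact ⟨j, Finset.mem_univ j, mul_pos hKij (hg_pos j)⟩
  -- key strict inequality
  have key : ∀ i, β ^ θ * K.mulVec g i < g i := by
    intro i
    have ht_nonneg : 0 ≤ (K.mulVec g i) ^ (1 / θ) := Real.rpow_nonneg (hKg_nonneg i) _
    have h1 : (β * (K.mulVec g i) ^ (1 / θ)) ^ θ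
        < (1 - β + β * (K.mulVec g i) ^ (1 / θ)) ^ θ :=
      Real.rpow_lt_rpow (mul_nonneg hβ0.le ht_nonneg) (by linarith) hθ
    have h2 : (β * (K.mulVec g i) ^ (1 / θ)) ^ θ = β ^ θ * ((K.mulVec g i) ^ (1 / θ)) ^ θ :=
      Real.mul_rpow hβ0.le ht_nonneg
    have h3 : ((K.mulVec g i) ^ (1 / θ)) ^ θ = K.mulVec g i := by
      rw [← Real.rpow_mul (hKg_nonneg i), one_div, inv_mul_cancel₀ (ne_of_gt hθ),
        Real.rpow_one]
    calc β ^ θ * K.mulVec g i = (β * (K.mulVec g i) ^ (1 / θ)) ^ θ := by rw [h2, h3]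
      _ < (1 - β + β * (K.mulVec g i) ^ (1 / θ)) ^ θ := h1
      _ = g i := (hfix i).symm
  -- sum against left eigenvector
  have hsum : ∑ i, estar i * (β ^ θ * K.mulVec g i) < ∑ i, estar i * g i := by
    apply Finset.sum_lt_sum_of_nonempty Finset.univ_nonempty
    intro i _
    exact mul_lt_mul_of_pos_left (key i) (hestar i)
  have hdot : ∑ i, estar i * K.mulVec g i = r * ∑ i, estar i * g i := by
    have := Matrix.dotProduct_mulVec estar K g
    have h2 : K.vecMul estar = r • estar := by
      rw [← Matrix.mulVec_transpose]; exact hKestar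
    simp only [dotProduct, h2, Pi.smul_apply, smul_eq_mul] at this ⊢
    rw [this, Finset.mul_sum]
    congr 1; ext i; ring
  have hS : 0 < ∑ i, estar i * g i :=
    Finset.sum_pos (fun i _ => mul_pos (hestar i) (hg_pos i)) Finset.univ_nonempty
  have hfin : β ^ θ * r * (∑ i, estar i * g i) < 1 * (∑ i, estar i * g i) := by
    calc β ^ θ * r * (∑ i, estar i * g i) = ∑ i, estar i * (β ^ θ * K.mulVec g i) := by
          rw [show ∑ i, estar i * (β ^ θ * K.mulVec g i) = β ^ θ * ∑ i, estar i * K.mulVec g i by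
            rw [Finset.mul_sum]; congr 1; ext i; ring, hdot]; ring
      _ < ∑ i, estar i * g i := hsum
      _ = 1 * (∑ i, estar i * g i) := by ring
  exact lt_of_mul_lt_mul_right hfin hS.le
end
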